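/- Let G be the bipartite graph on vertex set V_1 ∪ V_2 ∪ V_3 with |V_1| = n - m, |V_2| = |V_3| = m, whose edges are all edges between V_1 and V_2 together with a perfect matching between V_2 and V_3. Then for every i ≥ 0 the number of independent sets of size i in G equals (2^i - 1)·binomial(m, i) + binomial(n, i). -/

import Mathlib

open Finset Polynomial

noncomputable def indepCount {V : Type*} [Fintype V] (G : SimpleGraph V) (k : ℕ) : ℕ :=
  Set.ncard {s : Finset V | s.card = k ∧ ∀ v ∈ s, ∀ w ∈ s, ¬ G.Adj v w}

lemma auxSigmaCard (m i : ℕ) :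
    ((Finset.univ.powersetCard i : Finset (Finset (Fin m))).sigma
      (fun t => t.powerset.filter (fun u => u.Nonempty))).card
      = m.choose i * (2 ^ i - 1) := by
  classical
  rw [Finset.card_sigma]
  have h : ∀ t ∈ (Finset.univ.powersetCard i : Finset (Finset (Fin m))),
      (t.powerset.filter (fun u => u.Nonempty)).card = 2 ^ i - 1 := by
    intro t ht
    have htc : t.card = i := (Finset.mem_powersetCard.mp ht).2
    have h1 : (t.powerset.filter (fun u => ¬ u.Nonempty)) = {∅} := by
      ext u
      simp [Finset.not_nonempty_iff_eq_empty]
      rintro rfl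
      exact Finset.empty_subset t
    have h2 := Finset.card_filter_add_card_filter_not
      (s := t.powerset) (p := fun u => u.Nonempty)
    rw [h1] at h2
    simp [Finset.card_powerset, htc] at h2
    omega
  rw [Finset.sum_congr rfl h, Finset.sum_const, smul_eq_mul,
    Finset.card_powersetCard, Finset.card_fin]

theorem stmt17 (n m : ℕ) (hm : 0 < m) (hmn : m < n)
    (G : SimpleGraph (Fin (n - m) ⊕ Fin m ⊕ Fin m))
    (hG : G = SimpleGraph.fromRel (fun v w =>
      (∃ a b, v = Sum.inl a ∧ w = Sum.inr (Sum.inl b)) ∨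
      (∃ j, v = Sum.inr (Sum.inl j) ∧ w = Sum.inr (Sum.inr j)))) (i : ℕ) :
    indepCount G i = (2 ^ i - 1) * m.choose i + n.choose i := by
  classical
  -- characterize independence
  have key : ∀ s : Finset (Fin (n - m) ⊕ Fin m ⊕ Fin m),
      (∀ v ∈ s, ∀ w ∈ s, ¬ G.Adj v w) ↔
      ((∀ a b, ¬(Sum.inl a ∈ s ∧ Sum.inr (Sum.inl b) ∈ s)) ∧
       (∀ j : Fin m, ¬(Sum.inr (Sum.inl j) ∈ s ∧ Sum.inr (Sum.inr j) ∈ s))) := by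
    intro s
    subst hG
    constructor
    · intro h
      refine ⟨fun a b hab => ?_, fun j hj => ?_⟩
      · exact h _ hab.1 _ hab.2 ((SimpleGraph.fromRel_adj _ _ _).mpr
          ⟨by simp, Or.inl (Or.inl ⟨a, b, rfl, rfl⟩)⟩)
      · exact h _ hj.1 _ hj.2 ((SimpleGraph.fromRel_adj _ _ _).mpr
          ⟨by simp, Or.inl (Or.inr ⟨j, rfl, rfl⟩)⟩)
    · rintro ⟨h1, h2⟩ v hv w hw hadj
      rw [SimpleGraph.fromRel_adj] at hadj
      obtain ⟨hne, h | h⟩ := hadj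
      · rcases h with ⟨a, b, rfl, rfl⟩ | ⟨j, rfl, rfl⟩
        · exact h1 a b ⟨hv, hw⟩
        · exact h2 j ⟨hv, hw⟩
      · rcases h with ⟨a, b, rfl, rfl⟩ | ⟨j, rfl, rfl⟩
        · exact h1 a b ⟨hw, hv⟩
        · exact h2 j ⟨hw, hv⟩
  have hinjL : Function.Injective
      (fun b : Fin m => (Sum.inr (Sum.inl b) : Fin (n - m) ⊕ Fin m ⊕ Fin m)) := by
    intro a b h; simpa using h
  have hinjR : Function.Injective
      (fun b : Fin m => (Sum.inr (Sum.inr b) : Fin (n - m) ⊕ Fin m ⊕ Fin m)) := by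
    intro a b h; simpa using h
  set Sbig := Finset.univ.filter
      (fun s : Finset (Fin (n - m) ⊕ Fin m ⊕ Fin m) =>
        s.card = i ∧ (∀ a b, ¬(Sum.inl a ∈ s ∧ Sum.inr (Sum.inl b) ∈ s)) ∧
        (∀ j : Fin m, ¬(Sum.inr (Sum.inl j) ∈ s ∧ Sum.inr (Sum.inr j) ∈ s))) with hSbig
  have memSbig : ∀ s, s ∈ Sbig ↔
      (s.card = i ∧ (∀ a b, ¬(Sum.inl a ∈ s ∧ Sum.inr (Sum.inl b) ∈ s)) ∧
        (∀ j : Fin m, ¬(Sum.inr (Sum.inl j) ∈ s ∧ Sum.inr (Sum.inr j) ∈ s))) := by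
    intro s; rw [hSbig]; simp
  have hset : {s : Finset (Fin (n - m) ⊕ Fin m ⊕ Fin m) |
      s.card = i ∧ ∀ v ∈ s, ∀ w ∈ s, ¬ G.Adj v w} = ↑Sbig := by
    ext s
    rw [Set.mem_setOf_eq, Finset.mem_coe, memSbig]
    exact and_congr_right fun _ => key s
  unfold indepCount
  rw [hset, Set.ncard_coe_finset]
  rw [← Finset.card_filter_add_card_filter_not (s := Sbig)
    (p := fun s : Finset (Fin (n - m) ⊕ Fin m ⊕ Fin m) =>
      ∀ b : Fin m, Sum.inr (Sum.inl b) ∉ s)]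
  -- the part with no V2-vertices
  have hS0 : (Sbig.filter (fun s => ∀ b : Fin m, Sum.inr (Sum.inl b) ∉ s)).card
      = n.choose i := by
    have hU0 : (Finset.univ.filter
        (fun v : Fin (n - m) ⊕ Fin m ⊕ Fin m =>
          ∀ b : Fin m, v ≠ Sum.inr (Sum.inl b))).card = n := by
      have heq : (Finset.univ.filter
          (fun v : Fin (n - m) ⊕ Fin m ⊕ Fin m =>
            ∀ b : Fin m, v ≠ Sum.inr (Sum.inl b)))
          = Finset.univ \ Finset.univ.image
            (fun b : Fin m => (Sum.inr (Sum.inl b) : Fin (n - m) ⊕ Fin m ⊕ Fin m)) := by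
        ext v
        simp only [Finset.mem_filter, Finset.mem_univ, true_and, Finset.mem_sdiff,
          Finset.mem_image, not_exists]
        exact ⟨fun h b hb => h b hb.symm, fun h b hb => h b hb.symm⟩
      rw [heq, Finset.card_sdiff_of_subset (Finset.subset_univ _),
        Finset.card_image_of_injective _ hinjL, Finset.card_univ]
      simp only [Fintype.card_sum, Fintype.card_fin, Finset.card_univ]
      omega
    have heq2 : Sbig.filter (fun s => ∀ b : Fin m, Sum.inr (Sum.inl b) ∉ s)
        = (Finset.univ.filter
          (fun v : Fin (n - m) ⊕ Fin m ⊕ Fin m =>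
            ∀ b : Fin m, v ≠ Sum.inr (Sum.inl b))).powersetCard i := by
      ext s
      rw [Finset.mem_filter, memSbig, Finset.mem_powersetCard]
      constructor
      · rintro ⟨⟨hcard, h1, h2⟩, hp⟩
        refine ⟨fun v hv => ?_, hcard⟩
        simp only [Finset.mem_filter, Finset.mem_univ, true_and]
        intro b hvb
        exact hp b (hvb ▸ hv)
      · rintro ⟨hsub, hcard⟩
        have hp : ∀ b : Fin m, Sum.inr (Sum.inl b) ∉ s := by
          intro b hb
          have := hsub hb
          simp only [Finset.mem_filter, Finset.mem_univ, true_and] at this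
          exact this b rfl
        exact ⟨⟨hcard, fun a b hab => hp b hab.2, fun j hj => hp j hj.1⟩, hp⟩
    rw [heq2, Finset.card_powersetCard, hU0]
  -- disjointness of left/right images
  have himg_disj : ∀ (B C : Finset (Fin m)),
      Disjoint (B.image (fun j => (Sum.inr (Sum.inl j) : Fin (n - m) ⊕ Fin m ⊕ Fin m)))
        (C.image (fun j => Sum.inr (Sum.inr j))) := by
    intro B C
    rw [Finset.disjoint_left]
    rintro v hB hC
    obtain ⟨a, _, rfl⟩ := Finset.mem_image.mp hB
    obtain ⟨b, _, hb⟩ := Finset.mem_image.mp hC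
    simp at hb
  -- decomposition of independent sets containing a V2-vertex
  have hdecomp : ∀ s, s ∈ Sbig → (¬ ∀ b : Fin m, Sum.inr (Sum.inl b) ∉ s) →
      s = (Finset.univ.filter fun j : Fin m => Sum.inr (Sum.inl j) ∈ s).image
            (fun j => (Sum.inr (Sum.inl j) : Fin (n - m) ⊕ Fin m ⊕ Fin m))
          ∪ (Finset.univ.filter fun j : Fin m => Sum.inr (Sum.inr j) ∈ s).image
            (fun j => Sum.inr (Sum.inr j)) := by
    intro s hsB hsp
    push_neg at hsp
    obtain ⟨b0, hb0⟩ := hsp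
    rw [memSbig] at hsB
    obtain ⟨hcard, h1, h2⟩ := hsB
    have hnoV1 : ∀ a : Fin (n - m), (Sum.inl a : Fin (n - m) ⊕ Fin m ⊕ Fin m) ∉ s :=
      fun a ha => h1 a b0 ⟨ha, hb0⟩
    ext v
    constructor
    · intro hv
      rcases v with a | j | j
      · exact absurd hv (hnoV1 a)
      · exact Finset.mem_union_left _ (Finset.mem_image.mpr ⟨j, by simp [hv], rfl⟩)
      · exact Finset.mem_union_right _ (Finset.mem_image.mpr ⟨j, by simp [hv], rfl⟩)
    · intro hv
      rcases Finset.mem_union.mp hv with h | h <;>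
      · obtain ⟨j, hj, rfl⟩ := Finset.mem_image.mp h
        simp only [Finset.mem_filter, Finset.mem_univ, true_and] at hj
        exact hj
  have hBC_disj : ∀ s, s ∈ Sbig →
      Disjoint (Finset.univ.filter fun j : Fin m => Sum.inr (Sum.inl j) ∈ s)
        (Finset.univ.filter fun j : Fin m => Sum.inr (Sum.inr j) ∈ s) := by
    intro s hsB
    rw [memSbig] at hsB
    rw [Finset.disjoint_left]
    intro j hjB hjC
    simp only [Finset.mem_filter, Finset.mem_univ, true_and] at hjB hjC
    exact hsB.2.2 j ⟨hjB, hjC⟩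
  -- the part with some V2-vertex
  have hS1 : (Sbig.filter (fun s => ¬ ∀ b : Fin m, Sum.inr (Sum.inl b) ∉ s)).card
      = m.choose i * (2 ^ i - 1) := by
    rw [← auxSigmaCard m i]
    refine Finset.card_nbij'
      (fun s => ⟨(Finset.univ.filter fun j : Fin m => Sum.inr (Sum.inl j) ∈ s)
          ∪ (Finset.univ.filter fun j : Fin m => Sum.inr (Sum.inr j) ∈ s),
        Finset.univ.filter fun j : Fin m => Sum.inr (Sum.inl j) ∈ s⟩)
      (fun q => q.2.image (fun j => (Sum.inr (Sum.inl j) : Fin (n - m) ⊕ Fin m ⊕ Fin m))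
          ∪ (q.1 \ q.2).image (fun j => Sum.inr (Sum.inr j))) ?_ ?_ ?_ ?_
    · intro s hs
      rw [Finset.mem_coe, Finset.mem_filter] at hs
      obtain ⟨hsB, hsp⟩ := hs
      have hdec := hdecomp s hsB hsp
      have hd := hBC_disj s hsB
      push_neg at hsp
      obtain ⟨b0, hb0⟩ := hsp
      rw [memSbig] at hsB
      obtain ⟨hcard, h1, h2⟩ := hsB
      have hcards : (Finset.univ.filter fun j : Fin m => Sum.inr (Sum.inl j) ∈ s).card
          + (Finset.univ.filter fun j : Fin m => Sum.inr (Sum.inr j) ∈ s).card = i := by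
        rw [hdec, Finset.card_union_of_disjoint (himg_disj _ _),
          Finset.card_image_of_injective _ hinjL,
          Finset.card_image_of_injective _ hinjR] at hcard
        exact hcard
      refine Finset.mem_sigma.mpr ⟨?_, ?_⟩
      · exact Finset.mem_powersetCard.mpr ⟨Finset.subset_univ _,
          by rw [Finset.card_union_of_disjoint hd]; exact hcards⟩
      · refine Finset.mem_filter.mpr ⟨Finset.mem_powerset.mpr Finset.subset_union_left,
          ⟨b0, by simp [hb0]⟩⟩
    · rintro ⟨t, u⟩ hq
      rw [Finset.mem_coe, Finset.mem_sigma, Finset.mem_powersetCard, Finset.mem_filter,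
        Finset.mem_powerset] at hq
      obtain ⟨⟨-, htcard⟩, hut, hune⟩ := hq
      rw [Finset.mem_coe, Finset.mem_filter, memSbig]
      refine ⟨⟨?_, ?_, ?_⟩, ?_⟩
      · rw [Finset.card_union_of_disjoint (himg_disj _ _),
          Finset.card_image_of_injective _ hinjL,
          Finset.card_image_of_injective _ hinjR, Finset.card_sdiff_of_subset hut]
        have := Finset.card_le_card hut
        omega
      · rintro a b ⟨ha, -⟩
        simp at ha
      · rintro j ⟨hjl, hjr⟩
        simp only [Finset.mem_union, Finset.mem_image, Finset.mem_sdiff] at hjl hjr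
        rcases hjl with ⟨a, ha, hae⟩ | ⟨a, ha, hae⟩
        · rcases hjr with ⟨b, hb, hbe⟩ | ⟨b, hb, hbe⟩
          · simp at hbe
          · simp only [Sum.inr.injEq, Sum.inl.injEq, Sum.inr.injEq] at hae hbe
            subst hae; subst hbe
            exact hb.2 ha
        · simp at hae
      · push_neg
        obtain ⟨b0, hb0⟩ := hune
        exact ⟨b0, Finset.mem_union_left _ (Finset.mem_image_of_mem _ hb0)⟩
    · intro s hs
      rw [Finset.mem_coe, Finset.mem_filter] at hs
      obtain ⟨hsB, hsp⟩ := hs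
      have hdec := hdecomp s hsB hsp
      have hd := hBC_disj s hsB
      show (Finset.univ.filter fun j : Fin m => Sum.inr (Sum.inl j) ∈ s).image
            (fun j => (Sum.inr (Sum.inl j) : Fin (n - m) ⊕ Fin m ⊕ Fin m))
          ∪ (((Finset.univ.filter fun j : Fin m => Sum.inr (Sum.inl j) ∈ s)
              ∪ (Finset.univ.filter fun j : Fin m => Sum.inr (Sum.inr j) ∈ s))
            \ (Finset.univ.filter fun j : Fin m => Sum.inr (Sum.inl j) ∈ s)).image
            (fun j => Sum.inr (Sum.inr j)) = s
      rw [Finset.union_sdiff_cancel_left hd]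
      exact hdec.symm
    · rintro ⟨t, u⟩ hq
      rw [Finset.mem_coe, Finset.mem_sigma, Finset.mem_powersetCard, Finset.mem_filter,
        Finset.mem_powerset] at hq
      obtain ⟨⟨-, htcard⟩, hut, hune⟩ := hq
      have hB' : (Finset.univ.filter fun j : Fin m =>
          Sum.inr (Sum.inl j) ∈ u.image (fun j => (Sum.inr (Sum.inl j) :
            Fin (n - m) ⊕ Fin m ⊕ Fin m))
          ∪ (t \ u).image (fun j => Sum.inr (Sum.inr j))) = u := by
        ext j; simp
      have hC' : (Finset.univ.filter fun j : Fin m =>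
          Sum.inr (Sum.inr j) ∈ u.image (fun j => (Sum.inr (Sum.inl j) :
            Fin (n - m) ⊕ Fin m ⊕ Fin m))
          ∪ (t \ u).image (fun j => Sum.inr (Sum.inr j))) = t \ u := by
        ext j; simp
      show (⟨_ ∪ _, _⟩ : Σ _ : Finset (Fin m), Finset (Fin m)) = ⟨t, u⟩
      rw [hB', hC', Finset.union_sdiff_of_subset hut]
  rw [hS0, hS1]
  rw [Nat.add_comm, Nat.mul_comm]
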